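/- Every PDLsf sentence ξ is equivalent to some FO³[→,◁,≤] sentence; every PDLsf event formula φ is equivalent to some FO³[→,◁,≤] formula with one free variable; and every PDLsf path formula π is equivalent to some FO³[→,◁,≤] formula with two free variables. -/

import Mathlib

set_option maxHeartbeats 1000000

/-! ## Message sequence charts -/

/-- A message sequence chart (MSC) over processes `P` and labels `Lab`.
Events are natural numbers; `E` is the finite nonempty set of events. -/
structure MSC (P : Type) (Lab : Type) where
  /-- the finite set of events -/
  E : Finset ℕ
  nonemptyE : E.Nonempty
  /-- process edges `→` (direct successor on a process) -/
  proc : ℕ → ℕ → Prop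
  /-- message edges `◁` -/
  msg : ℕ → ℕ → Prop
  /-- location (process) of each event -/
  loc : ℕ → P
  /-- label of each event -/
  lab : ℕ → Lab
  proc_mem : ∀ e f, proc e f → e ∈ E ∧ f ∈ E
  msg_mem : ∀ e f, msg e f → e ∈ E ∧ f ∈ E
  proc_loc : ∀ e f, proc e f → loc e = loc f
  msg_loc : ∀ e f, msg e f → loc e ≠ loc f
  /-- on each process, any two events are comparable w.r.t. `→⁺` -/
  proc_total : ∀ e f, e ∈ E → f ∈ E → loc e = loc f →
    e = f ∨ Relation.TransGen proc e f ∨ Relation.TransGen proc f e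
  /-- `→` is the direct-successor (covering) relation of the order `→⁺` -/
  proc_cover : ∀ e f, proc e f →
    ¬ ∃ g, Relation.TransGen proc e g ∧ Relation.TransGen proc g f
  /-- every event belongs to at most one message edge -/
  msg_once : ∀ e f e' f', msg e f → msg e' f' →
    (e = e' ∨ e = f' ∨ f = e' ∨ f = f') → e = e' ∧ f = f'
  /-- FIFO condition -/
  fifo : ∀ e f e' f', msg e f → msg e' f' → loc e = loc e' → loc f = loc f' →
    (Relation.ReflTransGen proc e e' ↔ Relation.ReflTransGen proc f f')
  /-- `→ ∪ ◁` is acyclic -/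
  acyclic : ∀ e, ¬ Relation.TransGen (fun a b => proc a b ∨ msg a b) e e

namespace MSC

variable {P Lab : Type}

/-- `≤proc`, the reflexive transitive closure of `→`. -/
def procLe (M : MSC P Lab) : ℕ → ℕ → Prop := Relation.ReflTransGen M.proc

/-- `<proc`, the transitive closure of `→`. -/
def procLt (M : MSC P Lab) : ℕ → ℕ → Prop := Relation.TransGen M.proc

/-- the happened-before relation `≤ = (→ ∪ ◁)*`. -/
def hb (M : MSC P Lab) : ℕ → ℕ → Prop :=
  Relation.ReflTransGen (fun a b => M.proc a b ∨ M.msg a b)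

/-- Relabelling an MSC (same events and edges, new labelling). -/
def relabel {Γ : Type} (M : MSC P Lab) (γ : ℕ → Γ) : MSC P Γ where
  E := M.E
  nonemptyE := M.nonemptyE
  proc := M.proc
  msg := M.msg
  loc := M.loc
  lab := γ
  proc_mem := M.proc_mem
  msg_mem := M.msg_mem
  proc_loc := M.proc_loc
  msg_loc := M.msg_loc
  proc_total := M.proc_total
  proc_cover := M.proc_cover
  msg_once := M.msg_once
  fifo := M.fifo
  acyclic := M.acyclic

end MSC

/-! ## Star-free PDL -/

mutual
/-- Event formulas of star-free PDL. -/
inductive EF (P Lab : Type) : Type where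
  | proc : P → EF P Lab
  | lab : Lab → EF P Lab
  | or : EF P Lab → EF P Lab → EF P Lab
  | not : EF P Lab → EF P Lab
  | dia : PF P Lab → EF P Lab → EF P Lab
  | loop : PF P Lab → EF P Lab
/-- Path formulas of star-free PDL. -/
inductive PF (P Lab : Type) : Type where
  | next : PF P Lab
  | prev : PF P Lab
  | msg : P → P → PF P Lab
  | msgInv : P → P → PF P Lab
  | nextG : EF P Lab → PF P Lab
  | prevG : EF P Lab → PF P Lab
  | jump : P → P → PF P Lab
  | test : EF P Lab → PF P Lab
  | comp : PF P Lab → PF P Lab → PF P Lab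
  | union : PF P Lab → PF P Lab → PF P Lab
  | inter : PF P Lab → PF P Lab → PF P Lab
  | compl : PF P Lab → PF P Lab
end

mutual
/-- Satisfaction of event formulas at an event. -/
def EF.sat {P Lab : Type} (M : MSC P Lab) : EF P Lab → ℕ → Prop
  | .proc p, e => e ∈ M.E ∧ M.loc e = p
  | .lab a, e => e ∈ M.E ∧ M.lab e = a
  | .or φ ψ, e => EF.sat M φ e ∨ EF.sat M ψ e
  | .not φ, e => e ∈ M.E ∧ ¬ EF.sat M φ e
  | .dia π φ, e => ∃ f, PF.sem M π e f ∧ EF.sat M φ f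
  | .loop π, e => PF.sem M π e e
/-- Semantics of path formulas as binary relations on events. -/
def PF.sem {P Lab : Type} (M : MSC P Lab) : PF P Lab → ℕ → ℕ → Prop
  | .next, e, f => M.proc e f
  | .prev, e, f => M.proc f e
  | .msg p q, e, f => M.msg e f ∧ M.loc e = p ∧ M.loc f = q
  | .msgInv p q, e, f => M.msg f e ∧ M.loc f = p ∧ M.loc e = q
  | .nextG φ, e, f => M.procLt e f ∧ ∀ g, M.procLt e g → M.procLt g f → EF.sat M φ g
  | .prevG φ, e, f => M.procLt f e ∧ ∀ g, M.procLt f g → M.procLt g e → EF.sat M φ g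
  | .jump p r, e, f => e ∈ M.E ∧ f ∈ M.E ∧ M.loc e = p ∧ M.loc f = r
  | .test φ, e, f => e = f ∧ EF.sat M φ e
  | .comp π₁ π₂, e, f => ∃ g, PF.sem M π₁ e g ∧ PF.sem M π₂ g f
  | .union π₁ π₂, e, f => PF.sem M π₁ e f ∨ PF.sem M π₂ e f
  | .inter π₁ π₂, e, f => PF.sem M π₁ e f ∧ PF.sem M π₂ e f
  | .compl π, e, f => e ∈ M.E ∧ f ∈ M.E ∧ ¬ PF.sem M π e f
end

/-- Sentences of star-free PDL. -/
inductive PDLS (P Lab : Type) : Type where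
  | ex : EF P Lab → PDLS P Lab
  | or : PDLS P Lab → PDLS P Lab → PDLS P Lab
  | not : PDLS P Lab → PDLS P Lab

/-- Satisfaction of PDL sentences. -/
def PDLS.sat {P Lab : Type} (M : MSC P Lab) : PDLS P Lab → Prop
  | .ex φ => ∃ e ∈ M.E, EF.sat M φ e
  | .or ξ ζ => PDLS.sat M ξ ∨ PDLS.sat M ζ
  | .not ξ => ¬ PDLS.sat M ξ

/-- The four optional operators of star-free PDL. -/
inductive PDLOp : Type where
  | loop | union | inter | compl
deriving DecidableEq

mutual
/-- `EF.inFrag R φ` : the event formula `φ` belongs to the fragment `PDLsf[R]`. -/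
def EF.inFrag {P Lab : Type} (R : Set PDLOp) : EF P Lab → Prop
  | .proc _ => True
  | .lab _ => True
  | .or φ ψ => EF.inFrag R φ ∧ EF.inFrag R ψ
  | .not φ => EF.inFrag R φ
  | .dia π φ => PF.inFrag R π ∧ EF.inFrag R φ
  | .loop π => PDLOp.loop ∈ R ∧ PF.inFrag R π
/-- `PF.inFrag R π` : the path formula `π` belongs to the fragment `PDLsf[R]`. -/
def PF.inFrag {P Lab : Type} (R : Set PDLOp) : PF P Lab → Prop
  | .next => True
  | .prev => True
  | .msg _ _ => True
  | .msgInv _ _ => True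
  | .nextG φ => EF.inFrag R φ
  | .prevG φ => EF.inFrag R φ
  | .jump _ _ => True
  | .test φ => EF.inFrag R φ
  | .comp π₁ π₂ => PF.inFrag R π₁ ∧ PF.inFrag R π₂
  | .union π₁ π₂ => PDLOp.union ∈ R ∧ PF.inFrag R π₁ ∧ PF.inFrag R π₂
  | .inter π₁ π₂ => PDLOp.inter ∈ R ∧ PF.inFrag R π₁ ∧ PF.inFrag R π₂
  | .compl π => PDLOp.compl ∈ R ∧ PF.inFrag R π
end

/-- `PDLS.inFrag R ξ` : the sentence `ξ` belongs to the fragment `PDLsf[R]`. -/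
def PDLS.inFrag {P Lab : Type} (R : Set PDLOp) : PDLS P Lab → Prop
  | .ex φ => EF.inFrag R φ
  | .or ξ ζ => PDLS.inFrag R ξ ∧ PDLS.inFrag R ζ
  | .not ξ => PDLS.inFrag R ξ

/-- Conjunction of event formulas (derived operator). -/
def EF.and {P Lab : Type} (φ ψ : EF P Lab) : EF P Lab :=
  .not (.or (.not φ) (.not ψ))

/-- `isMinOf M π e m` : `m` is the `≤proc`-least element of `⟦π⟧_M(e)`
(in particular `⟦π⟧_M(e)` is nonempty). -/
def isMinOf {P Lab : Type} (M : MSC P Lab) (π : PF P Lab) (e m : ℕ) : Prop :=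
  PF.sem M π e m ∧ ∀ f, PF.sem M π e f → M.procLe m f

/-- `isMaxOf M π e m` : `m` is the `≤proc`-greatest element of `⟦π⟧_M(e)`
(in particular `⟦π⟧_M(e)` is nonempty). -/
def isMaxOf {P Lab : Type} (M : MSC P Lab) (π : PF P Lab) (e m : ℕ) : Prop :=
  PF.sem M π e m ∧ ∀ f, PF.sem M π e f → M.procLe f m

/-! ## MSO/FO logic over MSCs -/

/-- Formulas of MSO over MSCs: first-order kernel with atoms `p(x)`, `a(x)`,
`x = y`, `x → y`, `x ◁ y`, `x ≤ y` and additionally `x ∈ X_k` (monadic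
second-order variables, used for the EMSO prefix). -/
inductive FOS (P Lab : Type) : Type where
  | pred : P → ℕ → FOS P Lab
  | lab : Lab → ℕ → FOS P Lab
  | eq : ℕ → ℕ → FOS P Lab
  | edge : ℕ → ℕ → FOS P Lab
  | medge : ℕ → ℕ → FOS P Lab
  | le : ℕ → ℕ → FOS P Lab
  | inSet : ℕ → ℕ → FOS P Lab
  | or : FOS P Lab → FOS P Lab → FOS P Lab
  | not : FOS P Lab → FOS P Lab
  | ex : ℕ → FOS P Lab → FOS P Lab

/-- Satisfaction, with a first-order valuation `ν` and a second-order valuation `σ`.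
First-order quantification ranges over the events of the MSC. -/
def FOS.sat {P Lab : Type} (M : MSC P Lab) : FOS P Lab → (ℕ → ℕ) → (ℕ → Set ℕ) → Prop
  | .pred p x, ν, _ => M.loc (ν x) = p
  | .lab a x, ν, _ => M.lab (ν x) = a
  | .eq x y, ν, _ => ν x = ν y
  | .edge x y, ν, _ => M.proc (ν x) (ν y)
  | .medge x y, ν, _ => M.msg (ν x) (ν y)
  | .le x y, ν, _ => M.hb (ν x) (ν y)
  | .inSet x k, ν, σ => ν x ∈ σ k
  | .or Φ Ψ, ν, σ => FOS.sat M Φ ν σ ∨ FOS.sat M Ψ ν σ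
  | .not Φ, ν, σ => ¬ FOS.sat M Φ ν σ
  | .ex x Φ, ν, σ => ∃ e ∈ M.E, FOS.sat M Φ (Function.update ν x e) σ

/-- Free first-order variables. -/
def FOS.free {P Lab : Type} : FOS P Lab → Finset ℕ
  | .pred _ x => {x}
  | .lab _ x => {x}
  | .eq x y => {x, y}
  | .edge x y => {x, y}
  | .medge x y => {x, y}
  | .le x y => {x, y}
  | .inSet x _ => {x}
  | .or Φ Ψ => FOS.free Φ ∪ FOS.free Ψ
  | .not Φ => FOS.free Φ
  | .ex x Φ => (FOS.free Φ).erase x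

/-- All first-order variables occurring (free or bound). -/
def FOS.vars {P Lab : Type} : FOS P Lab → Finset ℕ
  | .pred _ x => {x}
  | .lab _ x => {x}
  | .eq x y => {x, y}
  | .edge x y => {x, y}
  | .medge x y => {x, y}
  | .le x y => {x, y}
  | .inSet x _ => {x}
  | .or Φ Ψ => FOS.vars Φ ∪ FOS.vars Ψ
  | .not Φ => FOS.vars Φ
  | .ex x Φ => insert x (FOS.vars Φ)

/-- A formula is first-order (`FO[→,◁,≤]`) iff it contains no set atoms. -/
def FOS.noSets {P Lab : Type} : FOS P Lab → Prop
  | .pred _ _ => True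
  | .lab _ _ => True
  | .eq _ _ => True
  | .edge _ _ => True
  | .medge _ _ => True
  | .le _ _ => True
  | .inSet _ _ => False
  | .or Φ Ψ => FOS.noSets Φ ∧ FOS.noSets Ψ
  | .not Φ => FOS.noSets Φ
  | .ex _ Φ => FOS.noSets Φ

/-! ## Communicating finite-state machines -/

/-- Actions of a process: internal `⟨a⟩`, send `!(a,m,q)`, receive `?(a,m,q)`. -/
inductive CAct (P Lab Msg : Type) : Type where
  | int : Lab → CAct P Lab Msg
  | snd : Lab → Msg → P → CAct P Lab Msg
  | rcv : Lab → Msg → P → CAct P Lab Msg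

/-- The label performed by an action. -/
def CAct.label {P Lab Msg : Type} : CAct P Lab Msg → Lab
  | .int a => a
  | .snd a _ _ => a
  | .rcv a _ _ => a

/-- A communicating finite-state machine over `P` and `Lab`. -/
structure CFM (P Lab : Type) where
  /-- states -/
  S : Type
  finS : Fintype S
  /-- messages -/
  Msg : Type
  finMsg : Fintype Msg
  /-- initial state of each process -/
  ι : P → S
  /-- transition relation of each process -/
  Δ : P → S → CAct P Lab Msg → S → Prop
  Δ_snd : ∀ p s a m q s', Δ p s (.snd a m q) s' → q ≠ p
  Δ_rcv : ∀ p s a m q s', Δ p s (.rcv a m q) s' → q ≠ p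
  /-- acceptance condition -/
  Acc : (P → S) → Prop

/-- Existence of an accepting run of a CFM on an MSC. -/
def CFM.Accepts {P Lab : Type} (A : CFM P Lab) (M : MSC P Lab) : Prop :=
  ∃ (src tgt : ℕ → A.S) (act : ℕ → CAct P Lab A.Msg),
    (∀ e ∈ M.E, A.Δ (M.loc e) (src e) (act e) (tgt e)) ∧
    (∀ e ∈ M.E, (act e).label = M.lab e) ∧
    (∀ e ∈ M.E, (¬ ∃ f, M.proc f e) → src e = A.ι (M.loc e)) ∧
    (∀ e f, M.proc e f → tgt e = src f) ∧
    (∀ e ∈ M.E, (¬ ∃ f, M.msg e f) → (¬ ∃ f, M.msg f e) → ∃ a, act e = .int a) ∧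
    (∀ e f, M.msg e f →
      ∃ a a' m, act e = .snd a m (M.loc f) ∧ act f = .rcv a' m (M.loc e)) ∧
    (∃ fin : P → A.S,
      (∀ p, (∀ e ∈ M.E, M.loc e ≠ p) → fin p = A.ι p) ∧
      (∀ e ∈ M.E, (¬ ∃ f, M.proc e f) → fin (M.loc e) = tgt e) ∧
      A.Acc fin)

/-- The language of a CFM. -/
def CFM.lang {P Lab : Type} (A : CFM P Lab) : Set (MSC P Lab) := {M | A.Accepts M}

/-! ## Letter-to-letter MSC transducers -/

/-- The relation accepted by a letter-to-letter MSC transducer from `Lab` to `Γ`,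
i.e., a CFM over `P` and `Lab × Γ`. -/
def Ltrans {P Lab Γ : Type} (A : CFM P (Lab × Γ)) (M : MSC P Lab) (N : MSC P Γ) : Prop :=
  ∃ γ : ℕ → Γ, N = M.relabel γ ∧ A.Accepts (M.relabel fun e => (M.lab e, γ e))

/-- `M_φ` : the MSC over `Bool` obtained from `M` by labelling each event with
the truth value of the event formula `φ`. -/
noncomputable def MSC.evalEF {P Lab : Type} (M : MSC P Lab) (φ : EF P Lab) : MSC P Bool :=
  M.relabel fun e => @ite Bool (EF.sat M φ e) (Classical.propDecidable _) true false

/-! ## Boolean combinations -/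

/-- Boolean combinations over atoms of type `α`. -/
inductive BC (α : Type) : Type where
  | atom : α → BC α
  | or : BC α → BC α → BC α
  | not : BC α → BC α

/-- Evaluation of a boolean combination given truth values of the atoms. -/
def BC.eval {α : Type} (v : α → Prop) : BC α → Prop
  | .atom a => v a
  | .or b c => BC.eval v b ∨ BC.eval v c
  | .not b => ¬ BC.eval v b

/-- The atoms occurring in a boolean combination. -/
def BC.atoms {α : Type} : BC α → Set α
  | .atom a => {a}
  | .or b c => BC.atoms b ∪ BC.atoms c
  | .not b => BC.atoms b

/-! ## Bounded MSCs -/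

/-- `r` is a linearization of `M`: a total order on the events containing
the happened-before relation. -/
def IsLinearization {P Lab : Type} (M : MSC P Lab) (r : ℕ → ℕ → Prop) : Prop :=
  (∀ e ∈ M.E, r e e) ∧
  (∀ e ∈ M.E, ∀ f ∈ M.E, r e f → r f e → e = f) ∧
  (∀ e ∈ M.E, ∀ f ∈ M.E, ∀ g ∈ M.E, r e f → r f g → r e g) ∧
  (∀ e ∈ M.E, ∀ f ∈ M.E, r e f ∨ r f e) ∧
  (∀ e ∈ M.E, ∀ f ∈ M.E, M.hb e f → r e f)

/-- `r` is a `B`-bounded linearization of `M`: at any point, each channel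
contains at most `B` pending messages. -/
def IsBBoundedLin {P Lab : Type} (M : MSC P Lab) (r : ℕ → ℕ → Prop) (B : ℕ) : Prop :=
  IsLinearization M r ∧
  ∀ g ∈ M.E, ∀ p q : P, p ≠ q →
    Set.ncard {ef : ℕ × ℕ | M.msg ef.1 ef.2 ∧ M.loc ef.1 = p ∧ M.loc ef.2 = q ∧
      r ef.1 g ∧ ¬ r ef.2 g} ≤ B

/-- `M` is `∃B`-bounded: some linearization of `M` is `B`-bounded. -/
def ExistsBBounded {P Lab : Type} (M : MSC P Lab) (B : ℕ) : Prop :=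
  ∃ r : ℕ → ℕ → Prop, IsBBoundedLin M r B

/-- `g` is a send event on channel `(p,q)`. -/
def isSendOn {P Lab : Type} (M : MSC P Lab) (p q : P) (g : ℕ) : Prop :=
  M.loc g = p ∧ ∃ h, M.msg g h ∧ M.loc h = q

/-- `revB M B f g` : `f` is a receive event with matching send `e` on some
channel `(p,q)`, and `g` is the `B`-th send on channel `(p,q)` strictly after `e`. -/
def revB {P Lab : Type} (M : MSC P Lab) (B : ℕ) (f g : ℕ) : Prop :=
  ∃ e, M.msg e f ∧ isSendOn M (M.loc e) (M.loc f) g ∧ M.procLt e g ∧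
    Set.ncard {g' | isSendOn M (M.loc e) (M.loc f) g' ∧ M.procLt e g' ∧ M.procLe g' g} = B

/-- `≤_B = (≤ ∪ rev_B)*`. -/
def leB {P Lab : Type} (M : MSC P Lab) (B : ℕ) : ℕ → ℕ → Prop :=
  Relation.ReflTransGen (fun a b => (M.proc a b ∨ M.msg a b) ∨ revB M B a b)

/-- `<_B`, the strict part of `≤_B`. -/
def ltB {P Lab : Type} (M : MSC P Lab) (B : ℕ) (e f : ℕ) : Prop :=
  leB M B e f ∧ ¬ leB M B f e

/-- `e ∥_B f` : incomparable w.r.t. `≤_B`. -/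
def parB {P Lab : Type} (M : MSC P Lab) (B : ℕ) (e f : ℕ) : Prop :=
  ¬ leB M B e f ∧ ¬ leB M B f e

/-- `↑_B e = {g : e ≤_B g}`. -/
def upB {P Lab : Type} (M : MSC P Lab) (B : ℕ) (e : ℕ) : Set ℕ :=
  {g | leB M B e g}

/-- The order `≺_B` (w.r.t. a fixed total order on `P`): `e ≺_B f` iff `e <_B f`, or
`e ∥_B f` and the `⊑`-minimum of `loc(↑_B e \ ↑_B f)` is strictly below the
`⊑`-minimum of `loc(↑_B f \ ↑_B e)`. -/
def precB {P Lab : Type} [LinearOrder P] (M : MSC P Lab) (B : ℕ) (e f : ℕ) : Prop :=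
  ltB M B e f ∨
    (parB M B e f ∧ ∃ p ∈ M.loc '' (upB M B e \ upB M B f),
      ∀ q ∈ M.loc '' (upB M B f \ upB M B e), p < q)
section AuxDev
open Relation

variable {P Lab : Type}

namespace MSC

lemma procLt_mem (M : MSC P Lab) {e f : ℕ} (h : M.procLt e f) : e ∈ M.E ∧ f ∈ M.E := by
  induction h with
  | single h' => exact M.proc_mem _ _ h'
  | tail _ h' ih => exact ⟨ih.1, (M.proc_mem _ _ h').2⟩

lemma procLt_loc (M : MSC P Lab) {e f : ℕ} (h : M.procLt e f) : M.loc e = M.loc f := by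
  induction h with
  | single h' => exact M.proc_loc _ _ h'
  | tail _ h' ih => exact ih.trans (M.proc_loc _ _ h')

lemma procLt_hb (M : MSC P Lab) {e f : ℕ} (h : M.procLt e f) : M.hb e f :=
  (Relation.TransGen.mono (fun _ _ h => Or.inl h) _ _ h).to_reflTransGen

lemma procLt_irrefl (M : MSC P Lab) (e : ℕ) : ¬ M.procLt e e :=
  fun h => M.acyclic e (Relation.TransGen.mono (fun _ _ h => Or.inl h) _ _ h)

lemma hb_antisymm (M : MSC P Lab) {e f : ℕ} (h : M.hb e f) (h' : M.hb f e) : e = f := by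
  by_contra hne
  rcases (Relation.reflTransGen_iff_eq_or_transGen.mp h') with heq | ht
  · exact hne heq
  · exact M.acyclic f (ht.trans_left h)

lemma procLt_iff (M : MSC P Lab) {e f : ℕ} (he : e ∈ M.E) (hf : f ∈ M.E) :
    M.procLt e f ↔ M.hb e f ∧ e ≠ f ∧ M.loc e = M.loc f := by
  constructor
  · intro h
    refine ⟨M.procLt_hb h, ?_, M.procLt_loc h⟩
    rintro rfl; exact M.procLt_irrefl e h
  · rintro ⟨hhb, hne, hloc⟩
    rcases M.proc_total e f he hf hloc with heq | h | h
    · exact absurd heq hne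
    · exact h
    · exact absurd (M.hb_antisymm hhb (M.procLt_hb h)) hne

end MSC


mutual
theorem EF.sat_mem {M : MSC P Lab} : ∀ (φ : EF P Lab) (e : ℕ), EF.sat M φ e → e ∈ M.E
  | .proc _, _, h => h.1
  | .lab _, _, h => h.1
  | .or φ ψ, e, h => h.elim (EF.sat_mem φ e) (EF.sat_mem ψ e)
  | .not _, _, h => h.1
  | .dia π φ, e, h => by
      obtain ⟨f, h1, _⟩ := h; exact (PF.sem_mem π e f h1).1
  | .loop π, e, h => (PF.sem_mem π e e h).1

theorem PF.sem_mem {M : MSC P Lab} : ∀ (π : PF P Lab) (e f : ℕ), PF.sem M π e f → e ∈ M.E ∧ f ∈ M.E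
  | .next, _, _, h => M.proc_mem _ _ h
  | .prev, _, _, h => (M.proc_mem _ _ h).symm
  | .msg _ _, _, _, h => M.msg_mem _ _ h.1
  | .msgInv _ _, _, _, h => (M.msg_mem _ _ h.1).symm
  | .nextG _, _, _, h => M.procLt_mem h.1
  | .prevG _, _, _, h => (M.procLt_mem h.1).symm
  | .jump _ _, _, _, h => ⟨h.1, h.2.1⟩
  | .test φ, e, f, h => by
      obtain ⟨rfl, h2⟩ := h; exact ⟨EF.sat_mem φ e h2, EF.sat_mem φ e h2⟩
  | .comp π₁ π₂, e, f, h => by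
      obtain ⟨g, h1, h2⟩ := h
      exact ⟨(PF.sem_mem π₁ e g h1).1, (PF.sem_mem π₂ g f h2).2⟩
  | .union π₁ π₂, e, f, h => h.elim (PF.sem_mem π₁ e f) (PF.sem_mem π₂ e f)
  | .inter π₁ π₂, e, f, h => PF.sem_mem π₁ e f h.1
  | .compl _, _, _, h => ⟨h.1, h.2.1⟩
end

/-! FO helpers -/

def fand (Φ Ψ : FOS P Lab) : FOS P Lab := .not (.or (.not Φ) (.not Ψ))

@[simp] lemma sat_fand {M : MSC P Lab} {Φ Ψ : FOS P Lab} {ν σ} :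
    FOS.sat M (fand Φ Ψ) ν σ ↔ FOS.sat M Φ ν σ ∧ FOS.sat M Ψ ν σ := by
  simp [fand, FOS.sat]

@[simp] lemma free_fand {Φ Ψ : FOS P Lab} : (fand Φ Ψ).free = Φ.free ∪ Ψ.free := rfl
@[simp] lemma vars_fand {Φ Ψ : FOS P Lab} : (fand Φ Ψ).vars = Φ.vars ∪ Ψ.vars := rfl
@[simp] lemma noSets_fand {Φ Ψ : FOS P Lab} : (fand Φ Ψ).noSets ↔ Φ.noSets ∧ Ψ.noSets :=
  Iff.rfl

def bigOr (i : ℕ) : List (FOS P Lab) → FOS P Lab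
  | [] => .not (.eq i i)
  | Φ :: L => .or Φ (bigOr i L)

lemma sat_bigOr {M : MSC P Lab} {i : ℕ} {ν σ} : ∀ {L : List (FOS P Lab)},
    FOS.sat M (bigOr i L) ν σ ↔ ∃ Φ ∈ L, FOS.sat M Φ ν σ
  | [] => by simp [bigOr, FOS.sat]
  | Φ :: L => by simp [bigOr, FOS.sat, sat_bigOr (L := L)]

lemma free_bigOr {i : ℕ} {s : Finset ℕ} (hi : i ∈ s) : ∀ {L : List (FOS P Lab)},
    (∀ Φ ∈ L, Φ.free ⊆ s) → (bigOr i L).free ⊆ s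
  | [], _ => by simpa [bigOr, FOS.free] using hi
  | Φ :: L, h => by
      simp only [bigOr, FOS.free]
      exact Finset.union_subset (h Φ (by simp))
        (free_bigOr hi fun Ψ hΨ => h Ψ (by simp [hΨ]))

lemma vars_bigOr {i : ℕ} {s : Finset ℕ} (hi : i ∈ s) : ∀ {L : List (FOS P Lab)},
    (∀ Φ ∈ L, Φ.vars ⊆ s) → (bigOr i L).vars ⊆ s
  | [], _ => by simpa [bigOr, FOS.vars] using hi
  | Φ :: L, h => by
      simp only [bigOr, FOS.vars]
      exact Finset.union_subset (h Φ (by simp))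
        (vars_bigOr hi fun Ψ hΨ => h Ψ (by simp [hΨ]))

lemma noSets_bigOr {i : ℕ} : ∀ {L : List (FOS P Lab)},
    (∀ Φ ∈ L, Φ.noSets) → (bigOr i L).noSets
  | [], _ => by simp [bigOr, FOS.noSets]
  | Φ :: L, h => ⟨h Φ (by simp), noSets_bigOr fun Ψ hΨ => h Ψ (by simp [hΨ])⟩

noncomputable def sameLocF [Fintype P] (i j : ℕ) : FOS P Lab :=
  bigOr i ((Finset.univ : Finset P).toList.map fun p => fand (.pred p i) (.pred p j))

lemma sat_sameLocF [Fintype P] {M : MSC P Lab} {i j : ℕ} {ν σ} :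
    FOS.sat M (sameLocF (Lab := Lab) i j) ν σ ↔ M.loc (ν i) = M.loc (ν j) := by
  simp only [sameLocF, sat_bigOr, List.mem_map, Finset.mem_toList, Finset.mem_univ, true_and]
  constructor
  · rintro ⟨Φ, ⟨p, rfl⟩, h⟩
    rw [sat_fand] at h
    exact h.1.trans h.2.symm
  · intro h
    exact ⟨_, ⟨M.loc (ν j), rfl⟩, by rw [sat_fand]; exact ⟨h, rfl⟩⟩

lemma free_sameLocF [Fintype P] {i j : ℕ} :
    (sameLocF (P := P) (Lab := Lab) i j).free ⊆ {i, j} := by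
  apply free_bigOr (by simp)
  rintro Φ hΦ
  simp only [List.mem_map] at hΦ
  obtain ⟨p, _, rfl⟩ := hΦ
  simp only [free_fand, FOS.free]
  exact Finset.union_subset (by simp) (by simp)

lemma vars_sameLocF [Fintype P] {i j : ℕ} :
    (sameLocF (P := P) (Lab := Lab) i j).vars ⊆ {i, j} := by
  apply vars_bigOr (by simp)
  rintro Φ hΦ
  simp only [List.mem_map] at hΦ
  obtain ⟨p, _, rfl⟩ := hΦ
  simp only [vars_fand, FOS.vars]
  exact Finset.union_subset (by simp) (by simp)

lemma noSets_sameLocF [Fintype P] {i j : ℕ} :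
    (sameLocF (P := P) (Lab := Lab) i j).noSets := by
  apply noSets_bigOr
  rintro Φ hΦ
  simp only [List.mem_map] at hΦ
  obtain ⟨p, _, rfl⟩ := hΦ
  exact ⟨trivial, trivial⟩

noncomputable def procLtF [Fintype P] (i j : ℕ) : FOS P Lab :=
  fand (.le i j) (fand (.not (.eq i j)) (sameLocF i j))

lemma sat_procLtF [Fintype P] {M : MSC P Lab} {i j : ℕ} {ν σ}
    (he : ν i ∈ M.E) (hf : ν j ∈ M.E) :
    FOS.sat M (procLtF (Lab := Lab) i j) ν σ ↔ M.procLt (ν i) (ν j) := by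
  rw [M.procLt_iff he hf]
  simp [procLtF, FOS.sat, sat_sameLocF]

lemma free_procLtF [Fintype P] {i j : ℕ} :
    (procLtF (P := P) (Lab := Lab) i j).free = {i, j} := by
  have h := free_sameLocF (P := P) (Lab := Lab) (i := i) (j := j)
  apply Finset.Subset.antisymm
  · simp only [procLtF, free_fand, FOS.free]
    exact Finset.union_subset (by rfl) (Finset.union_subset (by rfl) h)
  · simp only [procLtF, free_fand, FOS.free]
    exact Finset.subset_union_left

lemma noSets_procLtF [Fintype P] {i j : ℕ} : (procLtF (P := P) (Lab := Lab) i j).noSets :=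
  ⟨trivial, trivial, noSets_sameLocF⟩

/-! Fin 3 helpers -/

def th3 (i j : Fin 3) : Fin 3 := -(i + j)

lemma th3_ne_left : ∀ {i j : Fin 3}, i ≠ j → th3 i j ≠ i := by decide
lemma th3_ne_right : ∀ {i j : Fin 3}, i ≠ j → th3 i j ≠ j := by decide
lemma fin3_succ_ne : ∀ i : Fin 3, i + 1 ≠ i := by decide
lemma fin3_val_lt (i : Fin 3) : (i : ℕ) < 3 := i.isLt
lemma fin3_val_mem (i : Fin 3) : (i : ℕ) ∈ ({0, 1, 2} : Finset ℕ) := by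
  have := i.isLt; interval_cases h : (i : ℕ) <;> simp
lemma fin3_val_ne {i j : Fin 3} (h : i ≠ j) : (i : ℕ) ≠ (j : ℕ) :=
  fun hv => h (Fin.val_injective hv)

/-! The FO³ translation -/

variable [Fintype P]

mutual
noncomputable def efT : EF P Lab → Fin 3 → FOS P Lab
  | .proc p, i => .pred p i
  | .lab a, i => .lab a i
  | .or φ ψ, i => .or (efT φ i) (efT ψ i)
  | .not φ, i => .not (efT φ i)
  | .dia π φ, i => .ex ↑(i + 1) (fand (pfT π i (i + 1)) (efT φ (i + 1)))
  | .loop π, i => .ex ↑(i + 1) (fand (.eq ↑i ↑(i + 1)) (pfT π i (i + 1)))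
noncomputable def pfT : PF P Lab → Fin 3 → Fin 3 → FOS P Lab
  | .next, i, j => .edge ↑i ↑j
  | .prev, i, j => .edge ↑j ↑i
  | .msg p q, i, j => fand (.medge ↑i ↑j) (fand (.pred p ↑i) (.pred q ↑j))
  | .msgInv p q, i, j => fand (.medge ↑j ↑i) (fand (.pred p ↑j) (.pred q ↑i))
  | .nextG φ, i, j => fand (procLtF ↑i ↑j)
      (.not (.ex ↑(th3 i j) (fand (procLtF ↑i ↑(th3 i j))
        (fand (procLtF ↑(th3 i j) ↑j) (.not (efT φ (th3 i j)))))))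
  | .prevG φ, i, j => fand (procLtF ↑j ↑i)
      (.not (.ex ↑(th3 i j) (fand (procLtF ↑j ↑(th3 i j))
        (fand (procLtF ↑(th3 i j) ↑i) (.not (efT φ (th3 i j)))))))
  | .jump p r, i, j => fand (.pred p ↑i) (.pred r ↑j)
  | .test φ, i, j => fand (.eq ↑i ↑j) (efT φ i)
  | .comp π₁ π₂, i, j => .ex ↑(th3 i j) (fand (pfT π₁ i (th3 i j)) (pfT π₂ (th3 i j) j))
  | .union π₁ π₂, i, j => .or (pfT π₁ i j) (pfT π₂ i j)
  | .inter π₁ π₂, i, j => fand (pfT π₁ i j) (pfT π₂ i j)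
  | .compl π, i, j => .not (pfT π i j)
end

mutual
theorem efT_noSets : ∀ (φ : EF P Lab) (i : Fin 3), (efT φ i).noSets
  | .proc _, _ => trivial
  | .lab _, _ => trivial
  | .or φ ψ, i => ⟨efT_noSets φ i, efT_noSets ψ i⟩
  | .not φ, i => efT_noSets φ i
  | .dia π φ, i => ⟨pfT_noSets π i (i + 1), efT_noSets φ (i + 1)⟩
  | .loop π, i => ⟨trivial, pfT_noSets π i (i + 1)⟩
theorem pfT_noSets : ∀ (π : PF P Lab) (i j : Fin 3), (pfT π i j).noSets
  | .next, _, _ => trivial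
  | .prev, _, _ => trivial
  | .msg _ _, _, _ => ⟨trivial, trivial, trivial⟩
  | .msgInv _ _, _, _ => ⟨trivial, trivial, trivial⟩
  | .nextG φ, i, j =>
      ⟨noSets_procLtF, noSets_procLtF, noSets_procLtF, efT_noSets φ (th3 i j)⟩
  | .prevG φ, i, j =>
      ⟨noSets_procLtF, noSets_procLtF, noSets_procLtF, efT_noSets φ (th3 i j)⟩
  | .jump _ _, _, _ => ⟨trivial, trivial⟩
  | .test φ, i, _ => ⟨trivial, efT_noSets φ i⟩
  | .comp π₁ π₂, i, j => ⟨pfT_noSets π₁ i (th3 i j), pfT_noSets π₂ (th3 i j) j⟩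
  | .union π₁ π₂, i, j => ⟨pfT_noSets π₁ i j, pfT_noSets π₂ i j⟩
  | .inter π₁ π₂, i, j => ⟨pfT_noSets π₁ i j, pfT_noSets π₂ i j⟩
  | .compl π, i, j => pfT_noSets π i j
end

lemma pair_sub (i j : Fin 3) : ({(i : ℕ), (j : ℕ)} : Finset ℕ) ⊆ {0, 1, 2} := by
  simp only [Finset.insert_subset_iff, Finset.singleton_subset_iff]
  exact ⟨fin3_val_mem i, fin3_val_mem j⟩

lemma vars_procLtF' (i j : Fin 3) :
    (procLtF (P := P) (Lab := Lab) (i : ℕ) (j : ℕ)).vars ⊆ {0, 1, 2} := by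
  refine subset_trans ?_ (pair_sub i j)
  simp only [procLtF, vars_fand, FOS.vars]
  exact Finset.union_subset (by rfl) (Finset.union_subset (by rfl) vars_sameLocF)

mutual
theorem efT_vars : ∀ (φ : EF P Lab) (i : Fin 3), (efT φ i).vars ⊆ {0, 1, 2}
  | .proc _, i => by
      simpa [efT, FOS.vars] using fin3_val_mem i
  | .lab _, i => by
      simpa [efT, FOS.vars] using fin3_val_mem i
  | .or φ ψ, i => by
      simp only [efT, FOS.vars]
      exact Finset.union_subset (efT_vars φ i) (efT_vars ψ i)
  | .not φ, i => efT_vars φ i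
  | .dia π φ, i => by
      simp only [efT, FOS.vars, vars_fand, Finset.insert_subset_iff]
      exact ⟨fin3_val_mem _, Finset.union_subset (pfT_vars π i (i + 1)) (efT_vars φ (i + 1))⟩
  | .loop π, i => by
      simp only [efT, FOS.vars, vars_fand, Finset.insert_subset_iff]
      refine ⟨fin3_val_mem _, Finset.union_subset ?_ (pfT_vars π i (i + 1))⟩
      exact pair_sub i (i + 1)
theorem pfT_vars : ∀ (π : PF P Lab) (i j : Fin 3), (pfT π i j).vars ⊆ {0, 1, 2}
  | .next, i, j => pair_sub i j
  | .prev, i, j => pair_sub j i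
  | .msg _ _, i, j => by
      simp only [pfT, vars_fand, FOS.vars]
      refine Finset.union_subset (pair_sub i j) (Finset.union_subset ?_ ?_) <;>
        simpa using fin3_val_mem _
  | .msgInv _ _, i, j => by
      simp only [pfT, vars_fand, FOS.vars]
      refine Finset.union_subset (pair_sub j i) (Finset.union_subset ?_ ?_) <;>
        simpa using fin3_val_mem _
  | .nextG φ, i, j => by
      simp only [pfT, vars_fand, FOS.vars, Finset.insert_subset_iff]
      exact Finset.union_subset (vars_procLtF' i j)
        (Finset.insert_subset (fin3_val_mem _) (Finset.union_subset (vars_procLtF' i (th3 i j))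
          (Finset.union_subset (vars_procLtF' (th3 i j) j) (efT_vars φ (th3 i j)))))
  | .prevG φ, i, j => by
      simp only [pfT, vars_fand, FOS.vars, Finset.insert_subset_iff]
      exact Finset.union_subset (vars_procLtF' j i)
        (Finset.insert_subset (fin3_val_mem _) (Finset.union_subset (vars_procLtF' j (th3 i j))
          (Finset.union_subset (vars_procLtF' (th3 i j) i) (efT_vars φ (th3 i j)))))
  | .jump _ _, i, j => by
      simp only [pfT, vars_fand, FOS.vars]
      refine Finset.union_subset ?_ ?_ <;> simpa using fin3_val_mem _
  | .test φ, i, j => by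
      simp only [pfT, vars_fand, FOS.vars]
      exact Finset.union_subset (pair_sub i j) (efT_vars φ i)
  | .comp π₁ π₂, i, j => by
      simp only [pfT, vars_fand, FOS.vars, Finset.insert_subset_iff]
      exact ⟨fin3_val_mem _,
        Finset.union_subset (pfT_vars π₁ i (th3 i j)) (pfT_vars π₂ (th3 i j) j)⟩
  | .union π₁ π₂, i, j => by
      simp only [pfT, FOS.vars]
      exact Finset.union_subset (pfT_vars π₁ i j) (pfT_vars π₂ i j)
  | .inter π₁ π₂, i, j => by
      simp only [pfT, vars_fand]
      exact Finset.union_subset (pfT_vars π₁ i j) (pfT_vars π₂ i j)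
  | .compl π, i, j => pfT_vars π i j
end

attribute [irreducible] sameLocF procLtF

lemma succ_ne' (i : Fin 3) : i ≠ i + 1 := (fin3_succ_ne i).symm

mutual
theorem efT_free : ∀ (φ : EF P Lab) (i : Fin 3), (efT φ i).free = {(i : ℕ)}
  | .proc _, i => rfl
  | .lab _, i => rfl
  | .or φ ψ, i => by
      simp only [efT, FOS.free, efT_free φ i, efT_free ψ i, Finset.union_self]
  | .not φ, i => efT_free φ i
  | .dia π φ, i => by
      have h1 := fin3_val_ne (succ_ne' i)
      simp only [efT, FOS.free, free_fand, pfT_free π i (i + 1) (succ_ne' i),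
        efT_free φ (i + 1)]
      ext a
      simp only [Finset.mem_erase, Finset.mem_union, Finset.mem_insert, Finset.mem_singleton]
      try omega
  | .loop π, i => by
      have h1 := fin3_val_ne (succ_ne' i)
      simp only [efT, FOS.free, free_fand, pfT_free π i (i + 1) (succ_ne' i)]
      ext a
      simp only [Finset.mem_erase, Finset.mem_union, Finset.mem_insert, Finset.mem_singleton]
      try omega
theorem pfT_free : ∀ (π : PF P Lab) (i j : Fin 3), i ≠ j →
    (pfT π i j).free = {(i : ℕ), (j : ℕ)}
  | .next, i, j, _ => rfl
  | .prev, i, j, _ => by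
      simp only [pfT, FOS.free]
      exact Finset.pair_comm _ _
  | .msg _ _, i, j, _ => by
      simp only [pfT, free_fand, FOS.free]
      ext a
      simp only [Finset.mem_union, Finset.mem_insert, Finset.mem_singleton]
      try omega
  | .msgInv _ _, i, j, _ => by
      simp only [pfT, free_fand, FOS.free]
      ext a
      simp only [Finset.mem_union, Finset.mem_insert, Finset.mem_singleton]
      try omega
  | .nextG φ, i, j, hij => by
      have h1 := fin3_val_ne (th3_ne_left hij)
      have h2 := fin3_val_ne (th3_ne_right hij)
      simp only [pfT, free_fand, FOS.free, free_procLtF, efT_free φ (th3 i j)]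
      ext a
      simp only [Finset.mem_erase, Finset.mem_union, Finset.mem_insert, Finset.mem_singleton]
      try omega
  | .prevG φ, i, j, hij => by
      have h1 := fin3_val_ne (th3_ne_left hij)
      have h2 := fin3_val_ne (th3_ne_right hij)
      simp only [pfT, free_fand, FOS.free, free_procLtF, efT_free φ (th3 i j)]
      ext a
      simp only [Finset.mem_erase, Finset.mem_union, Finset.mem_insert, Finset.mem_singleton]
      try omega
  | .jump _ _, i, j, _ => by
      simp only [pfT, free_fand, FOS.free]
      ext a
      simp only [Finset.mem_union, Finset.mem_insert, Finset.mem_singleton]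
      try omega
  | .test φ, i, j, _ => by
      simp only [pfT, free_fand, FOS.free, efT_free φ i]
      ext a
      simp only [Finset.mem_union, Finset.mem_insert, Finset.mem_singleton]
      try omega
  | .comp π₁ π₂, i, j, hij => by
      have h1 := fin3_val_ne (th3_ne_left hij)
      have h2 := fin3_val_ne (th3_ne_right hij)
      simp only [pfT, FOS.free, free_fand,
        pfT_free π₁ i (th3 i j) (Ne.symm (th3_ne_left hij)),
        pfT_free π₂ (th3 i j) j (th3_ne_right hij)]
      ext a
      simp only [Finset.mem_erase, Finset.mem_union, Finset.mem_insert, Finset.mem_singleton]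
      try omega
  | .union π₁ π₂, i, j, hij => by
      simp only [pfT, FOS.free, pfT_free π₁ i j hij, pfT_free π₂ i j hij, Finset.union_self]
  | .inter π₁ π₂, i, j, hij => by
      simp only [pfT, free_fand, pfT_free π₁ i j hij, pfT_free π₂ i j hij, Finset.union_self]
  | .compl π, i, j, hij => pfT_free π i j hij
end

attribute [irreducible] fand

mutual
theorem efT_sem : ∀ (φ : EF P Lab) (i : Fin 3) (M : MSC P Lab) (ν : ℕ → ℕ) (σ : ℕ → Set ℕ),
    ν ↑i ∈ M.E → (EF.sat M φ (ν ↑i) ↔ FOS.sat M (efT φ i) ν σ)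
  | .proc p, i, M, ν, σ, he => by
      simp only [EF.sat, efT, FOS.sat]
      exact ⟨fun h => h.2, fun h => ⟨he, h⟩⟩
  | .lab a, i, M, ν, σ, he => by
      simp only [EF.sat, efT, FOS.sat]
      exact ⟨fun h => h.2, fun h => ⟨he, h⟩⟩
  | .or φ ψ, i, M, ν, σ, he => by
      simp only [EF.sat, efT, FOS.sat, efT_sem φ i M ν σ he, efT_sem ψ i M ν σ he]
  | .not φ, i, M, ν, σ, he => by
      simp only [EF.sat, efT, FOS.sat, ← efT_sem φ i M ν σ he]
      exact ⟨fun h => h.2, fun h => ⟨he, h⟩⟩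
  | .dia π φ, i, M, ν, σ, he => by
      have hij := succ_ne' i
      have hv : (↑i : ℕ) ≠ ↑(i + 1) := fin3_val_ne hij
      simp only [EF.sat, efT, FOS.sat, sat_fand]
      constructor
      · rintro ⟨f, hsem, hsat⟩
        have hf : f ∈ M.E := (PF.sem_mem π _ f hsem).2
        refine ⟨f, hf, ?_, ?_⟩
        · rw [← pfT_sem π i (i + 1) hij M (Function.update ν ↑(i + 1) f) σ
            (by rw [Function.update_of_ne hv]; exact he)
            (by rw [Function.update_self]; exact hf)]
          rw [Function.update_of_ne hv, Function.update_self]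
          exact hsem
        · rw [← efT_sem φ (i + 1) M (Function.update ν ↑(i + 1) f) σ
            (by rw [Function.update_self]; exact hf)]
          rw [Function.update_self]
          exact hsat
      · rintro ⟨f, hf, h1, h2⟩
        refine ⟨f, ?_, ?_⟩
        · have := (pfT_sem π i (i + 1) hij M (Function.update ν ↑(i + 1) f) σ
            (by rw [Function.update_of_ne hv]; exact he)
            (by rw [Function.update_self]; exact hf)).mpr h1
          rwa [Function.update_of_ne hv, Function.update_self] at this
        · have := (efT_sem φ (i + 1) M (Function.update ν ↑(i + 1) f) σ
            (by rw [Function.update_self]; exact hf)).mpr h2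
          rwa [Function.update_self] at this
  | .loop π, i, M, ν, σ, he => by
      have hij := succ_ne' i
      have hv : (↑i : ℕ) ≠ ↑(i + 1) := fin3_val_ne hij
      simp only [EF.sat, efT, FOS.sat, sat_fand]
      constructor
      · intro h
        refine ⟨ν ↑i, he, ?_, ?_⟩
        · rw [Function.update_of_ne hv, Function.update_self]
        · rw [← pfT_sem π i (i + 1) hij M (Function.update ν ↑(i + 1) (ν ↑i)) σ
            (by rw [Function.update_of_ne hv]; exact he)
            (by rw [Function.update_self]; exact he)]
          rw [Function.update_of_ne hv, Function.update_self]
          exact h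
      · rintro ⟨g, hg, heq, hs⟩
        rw [Function.update_of_ne hv, Function.update_self] at heq
        have := (pfT_sem π i (i + 1) hij M (Function.update ν ↑(i + 1) g) σ
            (by rw [Function.update_of_ne hv]; exact he)
            (by rw [Function.update_self]; exact hg)).mpr hs
        rw [Function.update_of_ne hv, Function.update_self] at this
        rw [← heq] at this
        exact this
theorem pfT_sem : ∀ (π : PF P Lab) (i j : Fin 3), i ≠ j →
    ∀ (M : MSC P Lab) (ν : ℕ → ℕ) (σ : ℕ → Set ℕ), ν ↑i ∈ M.E → ν ↑j ∈ M.E →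
    (PF.sem M π (ν ↑i) (ν ↑j) ↔ FOS.sat M (pfT π i j) ν σ)
  | .next, i, j, _, M, ν, σ, _, _ => by
      simp only [PF.sem, pfT, FOS.sat]
  | .prev, i, j, _, M, ν, σ, _, _ => by
      simp only [PF.sem, pfT, FOS.sat]
  | .msg p q, i, j, _, M, ν, σ, _, _ => by
      simp only [PF.sem, pfT, sat_fand, FOS.sat, and_assoc]
  | .msgInv p q, i, j, _, M, ν, σ, _, _ => by
      simp only [PF.sem, pfT, sat_fand, FOS.sat, and_assoc]
  | .nextG φ, i, j, hij, M, ν, σ, he, hf => by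
      have hik : (↑i : ℕ) ≠ ↑(th3 i j) := (fin3_val_ne (th3_ne_left hij)).symm
      have hjk : (↑j : ℕ) ≠ ↑(th3 i j) := (fin3_val_ne (th3_ne_right hij)).symm
      simp only [PF.sem, pfT, sat_fand, FOS.sat]
      rw [sat_procLtF he hf]
      constructor
      · rintro ⟨hlt, hall⟩
        refine ⟨hlt, ?_⟩
        rintro ⟨g, hg, h1, h2, h3⟩
        rw [sat_procLtF (by rw [Function.update_of_ne hik]; exact he)
          (by rw [Function.update_self]; exact hg)] at h1
        rw [Function.update_of_ne hik, Function.update_self] at h1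
        rw [sat_procLtF (by rw [Function.update_self]; exact hg)
          (by rw [Function.update_of_ne hjk]; exact hf)] at h2
        rw [Function.update_self, Function.update_of_ne hjk] at h2
        apply h3
        rw [← efT_sem φ (th3 i j) M (Function.update ν ↑(th3 i j) g) σ
          (by rw [Function.update_self]; exact hg)]
        rw [Function.update_self]
        exact hall g h1 h2
      · rintro ⟨hlt, hnex⟩
        refine ⟨hlt, ?_⟩
        intro g hg1 hg2
        by_contra hns
        apply hnex
        refine ⟨g, (M.procLt_mem hg1).2, ?_, ?_, ?_⟩
        · rw [sat_procLtF (by rw [Function.update_of_ne hik]; exact he)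
            (by rw [Function.update_self]; exact (M.procLt_mem hg1).2)]
          rw [Function.update_of_ne hik, Function.update_self]
          exact hg1
        · rw [sat_procLtF (by rw [Function.update_self]; exact (M.procLt_mem hg1).2)
            (by rw [Function.update_of_ne hjk]; exact hf)]
          rw [Function.update_self, Function.update_of_ne hjk]
          exact hg2
        · intro hs
          apply hns
          have := (efT_sem φ (th3 i j) M (Function.update ν ↑(th3 i j) g) σ
            (by rw [Function.update_self]; exact (M.procLt_mem hg1).2)).mpr hs
          rwa [Function.update_self] at this
  | .prevG φ, i, j, hij, M, ν, σ, he, hf => by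
      have hik : (↑i : ℕ) ≠ ↑(th3 i j) := (fin3_val_ne (th3_ne_left hij)).symm
      have hjk : (↑j : ℕ) ≠ ↑(th3 i j) := (fin3_val_ne (th3_ne_right hij)).symm
      simp only [PF.sem, pfT, sat_fand, FOS.sat]
      rw [sat_procLtF hf he]
      constructor
      · rintro ⟨hlt, hall⟩
        refine ⟨hlt, ?_⟩
        rintro ⟨g, hg, h1, h2, h3⟩
        rw [sat_procLtF (by rw [Function.update_of_ne hjk]; exact hf)
          (by rw [Function.update_self]; exact hg)] at h1
        rw [Function.update_of_ne hjk, Function.update_self] at h1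
        rw [sat_procLtF (by rw [Function.update_self]; exact hg)
          (by rw [Function.update_of_ne hik]; exact he)] at h2
        rw [Function.update_self, Function.update_of_ne hik] at h2
        apply h3
        rw [← efT_sem φ (th3 i j) M (Function.update ν ↑(th3 i j) g) σ
          (by rw [Function.update_self]; exact hg)]
        rw [Function.update_self]
        exact hall g h1 h2
      · rintro ⟨hlt, hnex⟩
        refine ⟨hlt, ?_⟩
        intro g hg1 hg2
        by_contra hns
        apply hnex
        refine ⟨g, (M.procLt_mem hg1).2, ?_, ?_, ?_⟩
        · rw [sat_procLtF (by rw [Function.update_of_ne hjk]; exact hf)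
            (by rw [Function.update_self]; exact (M.procLt_mem hg1).2)]
          rw [Function.update_of_ne hjk, Function.update_self]
          exact hg1
        · rw [sat_procLtF (by rw [Function.update_self]; exact (M.procLt_mem hg1).2)
            (by rw [Function.update_of_ne hik]; exact he)]
          rw [Function.update_self, Function.update_of_ne hik]
          exact hg2
        · intro hs
          apply hns
          have := (efT_sem φ (th3 i j) M (Function.update ν ↑(th3 i j) g) σ
            (by rw [Function.update_self]; exact (M.procLt_mem hg1).2)).mpr hs
          rwa [Function.update_self] at this
  | .jump p r, i, j, _, M, ν, σ, he, hf => by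
      simp only [PF.sem, pfT, sat_fand, FOS.sat]
      exact ⟨fun h => ⟨h.2.2.1, h.2.2.2⟩, fun h => ⟨he, hf, h.1, h.2⟩⟩
  | .test φ, i, j, _, M, ν, σ, he, _ => by
      simp only [PF.sem, pfT, sat_fand, FOS.sat, ← efT_sem φ i M ν σ he]
  | .comp π₁ π₂, i, j, hij, M, ν, σ, he, hf => by
      have hik : (↑i : ℕ) ≠ ↑(th3 i j) := (fin3_val_ne (th3_ne_left hij)).symm
      have hjk : (↑j : ℕ) ≠ ↑(th3 i j) := (fin3_val_ne (th3_ne_right hij)).symm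
      simp only [PF.sem, pfT, FOS.sat, sat_fand]
      constructor
      · rintro ⟨g, h1, h2⟩
        have hg : g ∈ M.E := (PF.sem_mem π₁ _ g h1).2
        refine ⟨g, hg, ?_, ?_⟩
        · rw [← pfT_sem π₁ i (th3 i j) (Ne.symm (th3_ne_left hij)) M
            (Function.update ν ↑(th3 i j) g) σ
            (by rw [Function.update_of_ne hik]; exact he)
            (by rw [Function.update_self]; exact hg)]
          rw [Function.update_of_ne hik, Function.update_self]
          exact h1
        · rw [← pfT_sem π₂ (th3 i j) j (th3_ne_right hij) M
            (Function.update ν ↑(th3 i j) g) σ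
            (by rw [Function.update_self]; exact hg)
            (by rw [Function.update_of_ne hjk]; exact hf)]
          rw [Function.update_self, Function.update_of_ne hjk]
          exact h2
      · rintro ⟨g, hg, h1, h2⟩
        refine ⟨g, ?_, ?_⟩
        · have := (pfT_sem π₁ i (th3 i j) (Ne.symm (th3_ne_left hij)) M
            (Function.update ν ↑(th3 i j) g) σ
            (by rw [Function.update_of_ne hik]; exact he)
            (by rw [Function.update_self]; exact hg)).mpr h1
          rwa [Function.update_of_ne hik, Function.update_self] at this
        · have := (pfT_sem π₂ (th3 i j) j (th3_ne_right hij) M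
            (Function.update ν ↑(th3 i j) g) σ
            (by rw [Function.update_self]; exact hg)
            (by rw [Function.update_of_ne hjk]; exact hf)).mpr h2
          rwa [Function.update_self, Function.update_of_ne hjk] at this
  | .union π₁ π₂, i, j, hij, M, ν, σ, he, hf => by
      simp only [PF.sem, pfT, FOS.sat, pfT_sem π₁ i j hij M ν σ he hf,
        pfT_sem π₂ i j hij M ν σ he hf]
  | .inter π₁ π₂, i, j, hij, M, ν, σ, he, hf => by
      simp only [PF.sem, pfT, sat_fand, pfT_sem π₁ i j hij M ν σ he hf,
        pfT_sem π₂ i j hij M ν σ he hf]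
  | .compl π, i, j, hij, M, ν, σ, he, hf => by
      simp only [PF.sem, pfT, FOS.sat, ← pfT_sem π i j hij M ν σ he hf]
      exact ⟨fun h => h.2.2, fun h => ⟨he, hf, h⟩⟩
end

/-! Sentence translation -/

noncomputable def sT : PDLS P Lab → FOS P Lab
  | .ex φ => .ex ↑(0 : Fin 3) (efT φ 0)
  | .or ξ ζ => .or (sT ξ) (sT ζ)
  | .not ξ => .not (sT ξ)

theorem sT_noSets : ∀ ξ : PDLS P Lab, (sT ξ).noSets
  | .ex φ => efT_noSets φ 0
  | .or ξ ζ => ⟨sT_noSets ξ, sT_noSets ζ⟩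
  | .not ξ => sT_noSets ξ

theorem sT_vars : ∀ ξ : PDLS P Lab, (sT ξ).vars ⊆ {0, 1, 2}
  | .ex φ => by
      simp only [sT, FOS.vars]
      exact Finset.insert_subset (fin3_val_mem 0) (efT_vars φ 0)
  | .or ξ ζ => by
      simp only [sT, FOS.vars]
      exact Finset.union_subset (sT_vars ξ) (sT_vars ζ)
  | .not ξ => sT_vars ξ

theorem sT_free : ∀ ξ : PDLS P Lab, (sT ξ).free = ∅
  | .ex φ => by
      simp [sT, FOS.free, efT_free φ 0]
  | .or ξ ζ => by
      simp [sT, FOS.free, sT_free ξ, sT_free ζ]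
  | .not ξ => sT_free ξ

theorem sT_sem : ∀ (ξ : PDLS P Lab) (M : MSC P Lab) (ν : ℕ → ℕ) (σ : ℕ → Set ℕ),
    PDLS.sat M ξ ↔ FOS.sat M (sT ξ) ν σ
  | .ex φ, M, ν, σ => by
      simp only [PDLS.sat, sT, FOS.sat]
      constructor
      · rintro ⟨e, he, hs⟩
        refine ⟨e, he, ?_⟩
        rw [← efT_sem φ 0 M (Function.update ν ↑(0 : Fin 3) e) σ
          (by rw [Function.update_self]; exact he)]
        rw [Function.update_self]
        exact hs
      · rintro ⟨e, he, hs⟩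
        refine ⟨e, he, ?_⟩
        have := (efT_sem φ 0 M (Function.update ν ↑(0 : Fin 3) e) σ
          (by rw [Function.update_self]; exact he)).mpr hs
        rwa [Function.update_self] at this
  | .or ξ ζ, M, ν, σ => by
      simp only [PDLS.sat, sT, FOS.sat, sT_sem ξ M ν σ, sT_sem ζ M ν σ]
  | .not ξ, M, ν, σ => by
      simp only [PDLS.sat, sT, FOS.sat, sT_sem ξ M ν σ]
end AuxDev


/-- Every `PDLsf` sentence (resp. event formula, path formula)
is equivalent to an `FO³[→,◁,≤]` sentence (resp. formula with one free
variable `x = 0`, formula with two free variables `x = 0`, `y = 1`). -/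
theorem pdlsf_to_fo3 {P Lab : Type} [Fintype P] [Nonempty P] [Fintype Lab] [Nonempty Lab] :
    (∀ ξ : PDLS P Lab, ∃ Φ : FOS P Lab,
      Φ.noSets ∧ Φ.vars ⊆ {0, 1, 2} ∧ Φ.free = ∅ ∧
      ∀ M : MSC P Lab, (PDLS.sat M ξ ↔ FOS.sat M Φ (fun _ => 0) (fun _ => ∅))) ∧
    (∀ φ : EF P Lab, ∃ Φ : FOS P Lab,
      Φ.noSets ∧ Φ.vars ⊆ {0, 1, 2} ∧ Φ.free = {0} ∧
      ∀ M : MSC P Lab, ∀ e ∈ M.E,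
        (EF.sat M φ e ↔ FOS.sat M Φ (fun _ => e) (fun _ => ∅))) ∧
    (∀ π : PF P Lab, ∃ Φ : FOS P Lab,
      Φ.noSets ∧ Φ.vars ⊆ {0, 1, 2} ∧ Φ.free = {0, 1} ∧
      ∀ M : MSC P Lab, ∀ e ∈ M.E, ∀ f ∈ M.E,
        (PF.sem M π e f ↔
          FOS.sat M Φ (fun n => if n = 0 then e else f) (fun _ => ∅))) := by
  refine ⟨?_, ?_, ?_⟩
  · intro ξ
    exact ⟨sT ξ, sT_noSets ξ, sT_vars ξ, sT_free ξ, fun M => sT_sem ξ M _ _⟩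
  · intro φ
    refine ⟨efT φ 0, efT_noSets φ 0, efT_vars φ 0, ?_, ?_⟩
    · rw [efT_free φ 0]
      rfl
    · intro M e he
      have := efT_sem φ 0 M (fun _ => e) (fun _ => ∅) (by exact he)
      simpa using this
  · intro π
    have h01 : (0 : Fin 3) ≠ 1 := by decide
    refine ⟨pfT π 0 1, pfT_noSets π 0 1, pfT_vars π 0 1, ?_, ?_⟩
    · rw [pfT_free π 0 1 h01]
      rfl
    · intro M e he f hf
      have := pfT_sem π 0 1 h01 M (fun n => if n = 0 then e else f) (fun _ => ∅)
        (by simpa using he) (by simpa using hf)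
      simpa using this
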